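/- Let R ⊆ ℤ be a set of ℤ-Bohr recurrence and let α = (α₁,…,α_d) ∈ ℝ^d. Then the set R̃ = {(⌊nα₁ + 1/2⌋, …, ⌊nα_d + 1/2⌋) ∈ ℤ^d : n ∈ R} is a set of ℤ^d-Bohr recurrence, where ⌊x⌋ denotes the greatest integer ≤ x. -/

import Mathlib

open scoped BigOperators

noncomputable section

/-- Distance from a real number to the nearest integer. -/
def torusNorm (x : ℝ) : ℝ := |x - round x|

/-- A subset `V ⊆ ℤ^d` is a Bohr₀ set if there are `k ≥ 1`, vectors `α₁, …, α_k ∈ ℝ^d`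
and `ε > 0` such that every `n ∈ ℤ^d` with `‖n·αⱼ‖_𝕋 < ε` for all `j` belongs to `V`. -/
def IsBohr0 (d : ℕ) (V : Set (Fin d → ℤ)) : Prop :=
  ∃ k : ℕ, 1 ≤ k ∧ ∃ α : Fin k → Fin d → ℝ, ∃ ε : ℝ, 0 < ε ∧
    ∀ n : Fin d → ℤ, (∀ j : Fin k, torusNorm (∑ i, (n i : ℝ) * α j i) < ε) → n ∈ V

/-- `R ⊆ ℤ^d` is a set of `ℤ^d`-Bohr recurrence if it meets every Bohr₀ set. -/
def IsBohrRecurrence (d : ℕ) (R : Set (Fin d → ℤ)) : Prop :=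
  ∀ V : Set (Fin d → ℤ), IsBohr0 d V → (R ∩ V).Nonempty

/-- Bohr₀ sets in `ℤ`. -/
def IsBohr0Z (V : Set ℤ) : Prop :=
  ∃ k : ℕ, 1 ≤ k ∧ ∃ α : Fin k → ℝ, ∃ ε : ℝ, 0 < ε ∧
    ∀ n : ℤ, (∀ j : Fin k, torusNorm ((n : ℝ) * α j) < ε) → n ∈ V

/-- `R ⊆ ℤ` is a set of `ℤ`-Bohr recurrence if it meets every Bohr₀ set of `ℤ`. -/
def IsBohrRecurrenceZ (R : Set ℤ) : Prop :=
  ∀ V : Set ℤ, IsBohr0Z V → (R ∩ V).Nonempty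

/-- If `R ⊆ ℤ` is a set of `ℤ`-Bohr recurrence and `α ∈ ℝ^d`, then
`{(⌊nα₁ + 1/2⌋, …, ⌊nα_d + 1/2⌋) : n ∈ R}` is a set of `ℤ^d`-Bohr recurrence. -/
lemma torusNorm_le_abs (x : ℝ) : torusNorm x ≤ |x| := by
  simpa [torusNorm] using round_le x 0

lemma torusNorm_add_le (x y : ℝ) : torusNorm (x + y) ≤ torusNorm x + torusNorm y := by
  calc |x + y - round (x + y)| ≤ |x + y - ((round x + round y : ℤ) : ℝ)| := round_le _ _
    _ = |(x - round x) + (y - round y)| := by push_cast; ring_nf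
    _ ≤ |x - round x| + |y - round y| := abs_add_le _ _

theorem rounded_multiples_bohr_recurrence
    (d : ℕ) (R : Set ℤ) (hR : IsBohrRecurrenceZ R) (α : Fin d → ℝ) :
    IsBohrRecurrence d
      ((fun n : ℤ => fun i : Fin d => ⌊(n : ℝ) * α i + 1 / 2⌋) '' R) := by
  intro V hV
  obtain ⟨k, hk, β, ε, hε, hBohr⟩ := hV
  set B : ℝ := ∑ j : Fin k, ∑ i : Fin d, |β j i| with hBdef
  have hB : 0 ≤ B := Finset.sum_nonneg fun j _ => Finset.sum_nonneg fun i _ => abs_nonneg _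
  set ε' : ℝ := ε / (2 * (B + 1)) with hε'def
  have hε'pos : 0 < ε' := by positivity
  set γ : Fin (k + d) → ℝ := Fin.append (fun j => ∑ i, α i * β j i) α with hγdef
  have hmem : ∀ n : ℤ, (∀ j : Fin (k + d), torusNorm ((n : ℝ) * γ j) < ε') →
      (fun i : Fin d => round ((n : ℝ) * α i)) ∈ V := by
    intro n hn
    apply hBohr
    intro j
    have h1 : ∀ i : Fin d, torusNorm ((n : ℝ) * α i) < ε' := by
      intro i
      have := hn (Fin.natAdd k i)
      simpa [hγdef, Fin.append_right] using this
    have h2 : torusNorm ((n : ℝ) * ∑ i, α i * β j i) < ε' := by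
      have := hn (Fin.castAdd d j)
      simpa [hγdef, Fin.append_left] using this
    set s : ℝ := ∑ i, ((n : ℝ) * α i - round ((n : ℝ) * α i)) * β j i with hsdef
    have key : (∑ i, ((round ((n : ℝ) * α i) : ℤ) : ℝ) * β j i)
        = (n : ℝ) * (∑ i, α i * β j i) + (-s) := by
      rw [hsdef, Finset.mul_sum, ← Finset.sum_neg_distrib, ← Finset.sum_add_distrib]
      exact Finset.sum_congr rfl fun i _ => by push_cast; ring
    have hs : |s| ≤ ε' * ∑ i, |β j i| := by
      calc |s| ≤ ∑ i, |((n : ℝ) * α i - round ((n : ℝ) * α i)) * β j i| :=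
            Finset.abs_sum_le_sum_abs _ _
        _ ≤ ∑ i, ε' * |β j i| := by
            apply Finset.sum_le_sum
            intro i _
            rw [abs_mul]
            exact mul_le_mul_of_nonneg_right (le_of_lt (h1 i)) (abs_nonneg _)
        _ = ε' * ∑ i, |β j i| := by rw [Finset.mul_sum]
    have hsumB : (∑ i, |β j i|) ≤ B := by
      rw [hBdef]
      exact Finset.single_le_sum (f := fun j => ∑ i, |β j i|)
        (fun j _ => Finset.sum_nonneg fun i _ => abs_nonneg _) (Finset.mem_univ j)
    calc torusNorm (∑ i, ((round ((n : ℝ) * α i) : ℤ) : ℝ) * β j i)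
        = torusNorm ((n : ℝ) * (∑ i, α i * β j i) + (-s)) := by rw [key]
      _ ≤ torusNorm ((n : ℝ) * (∑ i, α i * β j i)) + torusNorm (-s) :=
          torusNorm_add_le _ _
      _ ≤ torusNorm ((n : ℝ) * (∑ i, α i * β j i)) + |s| := by
          have h := torusNorm_le_abs (-s)
          rw [abs_neg] at h
          linarith
      _ < ε := by
          have hsB : |s| ≤ ε' * B := hs.trans (mul_le_mul_of_nonneg_left hsumB hε'pos.le)
          have hhalf : ε' * (B + 1) = ε / 2 := by
            rw [hε'def]; field_simp
          nlinarith [h2]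
  obtain ⟨n, hnR, hnV⟩ := hR {m : ℤ | (fun i : Fin d => round ((m : ℝ) * α i)) ∈ V}
    ⟨k + d, by omega, γ, ε', hε'pos, hmem⟩
  refine ⟨fun i => ⌊(n : ℝ) * α i + 1 / 2⌋, ⟨n, hnR, rfl⟩, ?_⟩
  have : (fun i : Fin d => ⌊(n : ℝ) * α i + 1 / 2⌋)
      = fun i : Fin d => round ((n : ℝ) * α i) := by
    funext i; rw [round_eq]
  rw [this]
  exact hnV
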